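/- For coprime integers 1 < a < b, the submonoid of ℕ generated by a and b has least nonzero element a, and the number of natural numbers not in this submonoid equals (a−1)(b−1)/2. -/

import Mathlib

private lemma stmt5_mem_iff (a b n : ℕ) :
    n ∈ AddSubmonoid.closure ({a, b} : Set ℕ) ↔ ∃ x y : ℕ, x * a + y * b = n := by
  rw [AddSubmonoid.mem_closure_pair]
  simp [smul_eq_mul]

private lemma stmt5_exists_y {a b : ℕ} (hab : Nat.Coprime a b) (h1 : 1 < a) (n : ℕ) :
    ∃ y, y < a ∧ y * b ≡ n [MOD a] := by
  obtain ⟨m, -, hm⟩ := Nat.exists_mul_mod_eq_one_of_coprime hab.symm h1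
  refine ⟨(n * m) % a, Nat.mod_lt _ (by omega), ?_⟩
  calc ((n * m) % a) * b ≡ (n * m) * b [MOD a] := (Nat.mod_modEq _ _).mul_right b
    _ = n * (b * m) := by ring
    _ ≡ n * 1 [MOD a] := Nat.ModEq.mul_left n
        (show (b * m) % a = 1 % a by rw [hm, Nat.mod_eq_of_lt h1])
    _ = n := by ring

private lemma stmt5_crit {a b : ℕ} (hab : Nat.Coprime a b) (h1 : 1 < a)
    {n y : ℕ} (hy : y < a) (hcong : y * b ≡ n [MOD a]) :
    n ∈ AddSubmonoid.closure ({a, b} : Set ℕ) ↔ y * b ≤ n := by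
  constructor
  · intro hmem
    obtain ⟨x, y', hxy⟩ := (stmt5_mem_iff a b n).mp hmem
    obtain ⟨x2, y2, hy2, heq⟩ : ∃ x2 y2, y2 < a ∧ x2 * a + y2 * b = n := by
      refine ⟨x + (y' / a) * b, y' % a, Nat.mod_lt _ (by omega), ?_⟩
      have h := Nat.div_add_mod y' a
      nlinarith [Nat.div_add_mod y' a]
    have hc2 : y2 * b ≡ n [MOD a] := by
      have : (x2 * a + y2 * b) % a = (y2 * b) % a := by
        rw [mul_comm x2 a, Nat.mul_add_mod]
      rw [← heq]
      exact (Nat.ModEq.symm this)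
    have hyy : y = y2 := by
      have hbb : b * y ≡ b * y2 [MOD a] := by
        have := hcong.trans hc2.symm
        rwa [mul_comm y b, mul_comm y2 b] at this
      have := Nat.ModEq.cancel_left_of_coprime hab hbb
      have h' := this
      unfold Nat.ModEq at h'
      rw [Nat.mod_eq_of_lt hy, Nat.mod_eq_of_lt hy2] at h'
      exact h'
    rw [hyy]
    omega
  · intro hle
    have hdvd : a ∣ n - y * b := (Nat.modEq_iff_dvd' hle).mp hcong
    obtain ⟨x, hx⟩ := hdvd
    refine (stmt5_mem_iff a b n).mpr ⟨x, y, ?_⟩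
    have : n = a * x + y * b := by omega
    rw [mul_comm x a]
    omega

private lemma stmt5_sym {a b : ℕ} (hab : Nat.Coprime a b) (h1 : 1 < a) (h2 : a < b)
    {n : ℕ} (hn : n ≤ a * b - a - b) :
    (n ∈ AddSubmonoid.closure ({a, b} : Set ℕ) ↔
      a * b - a - b - n ∉ AddSubmonoid.closure ({a, b} : Set ℕ)) := by
  have hb1 : 1 < b := h1.trans h2
  have hFnot := (frobeniusNumber_pair hab h1 hb1).1
  have hamb : a + b ≤ a * b := Nat.add_le_mul h1 hb1
  constructor
  · intro hmem hmem2
    apply hFnot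
    have heq : a * b - a - b = n + (a * b - a - b - n) := by omega
    rw [heq]
    exact AddSubmonoid.add_mem _ hmem hmem2
  · intro hnot
    obtain ⟨y, hy, hcong⟩ := stmt5_exists_y hab h1 n
    rw [stmt5_crit hab h1 hy hcong]
    by_contra hlt
    push_neg at hlt
    have hdvd : a ∣ y * b - n := (Nat.modEq_iff_dvd' hlt.le).mp hcong.symm
    obtain ⟨k, hk⟩ := hdvd
    have hk1 : 1 ≤ k := by
      rcases Nat.eq_zero_or_pos k with h | h
      · subst h; simp at hk; omega
      · exact h
    apply hnot
    refine (stmt5_mem_iff a b _).mpr ⟨k - 1, a - 1 - y, ?_⟩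
    have hyb : y * b ≤ (a - 1) * b := Nat.mul_le_mul_right b (by omega)
    have h3 : a ≤ a * b := Nat.le_mul_of_pos_right a (by omega)
    have h4 : b ≤ a * b - a := by omega
    have hk' : (y : ℤ) * b - n = a * k := by
      zify [hlt.le] at hk
      linarith
    zify [hk1, (show y ≤ a - 1 by omega), hn, h3, h4, h1.le]
    linear_combination -hk'
  
theorem stmt_5 (a b : ℕ) (hab : Nat.Coprime a b) (h1 : 1 < a) (h2 : a < b) :
    IsLeast {n : ℕ | n ∈ AddSubmonoid.closure ({a, b} : Set ℕ) ∧ n ≠ 0} a ∧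
    {n : ℕ | n ∉ AddSubmonoid.closure ({a, b} : Set ℕ)}.ncard = (a - 1) * (b - 1) / 2 := by
  have hb1 : 1 < b := h1.trans h2
  have hamb : a + b ≤ a * b := Nat.add_le_mul h1 hb1
  constructor
  · constructor
    · exact ⟨AddSubmonoid.subset_closure (by simp), by omega⟩
    · rintro n ⟨hmem, hn0⟩
      obtain ⟨x, y, hxy⟩ := (stmt5_mem_iff a b n).mp hmem
      rcases Nat.eq_zero_or_pos x with hx | hx
      · rcases Nat.eq_zero_or_pos y with hy | hy
        · simp [hx, hy] at hxy; omega
        · have : b ≤ y * b := Nat.le_mul_of_pos_left b hy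
          omega
      · have : a ≤ x * a := Nat.le_mul_of_pos_left a hx
        omega
  · classical
    set F := a * b - a - b with hF
    have hub := (frobeniusNumber_pair hab h1 hb1).2
    have hset : {n : ℕ | n ∉ AddSubmonoid.closure ({a, b} : Set ℕ)} =
        ↑((Finset.range (F + 1)).filter
          (fun n => n ∉ AddSubmonoid.closure ({a, b} : Set ℕ))) := by
      ext n
      simp only [Finset.coe_filter, Finset.mem_range, Set.mem_setOf_eq]
      constructor
      · intro h
        exact ⟨by have := hub h; omega, h⟩
      · tauto
    rw [hset, Set.ncard_coe_finset]
    have hcard : ((Finset.range (F + 1)).filter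
          (fun n => n ∉ AddSubmonoid.closure ({a, b} : Set ℕ))).card =
        ((Finset.range (F + 1)).filter
          (fun n => n ∈ AddSubmonoid.closure ({a, b} : Set ℕ))).card := by
      apply Finset.card_bij' (fun n _ => F - n) (fun n _ => F - n)
      · intro n hn
        simp only [Finset.mem_filter, Finset.mem_range] at hn ⊢
        refine ⟨by omega, ?_⟩
        by_contra hcon
        exact hn.2 ((stmt5_sym hab h1 h2 (by omega)).mpr hcon)
      · intro n hn
        simp only [Finset.mem_filter, Finset.mem_range] at hn ⊢
        have hle : n ≤ F := by omega
        refine ⟨by omega, ?_⟩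
        have := (stmt5_sym hab h1 h2 hle).mp hn.2
        exact this
      · intro n hn
        simp only [Finset.mem_filter, Finset.mem_range] at hn
        omega
      · intro n hn
        simp only [Finset.mem_filter, Finset.mem_range] at hn
        omega
    have hcards := Finset.card_filter_add_card_filter_not
      (s := Finset.range (F + 1))
      (fun n => n ∈ AddSubmonoid.closure ({a, b} : Set ℕ))
    rw [Finset.card_range] at hcards
    have hN : F + 1 = (a - 1) * (b - 1) := by
      have h3 : a ≤ a * b := Nat.le_mul_of_pos_right a (by omega)
      have h4 : b ≤ a * b - a := by omega
      zify [h3, h4, h1.le, hb1.le, hF]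
      ring
    omega
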